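/- Let n ≥ 3 and let p₀, …, p_{n−1} be a polyline in the Euclidean plane ℝ² with consecutive points distinct and every triple of consecutive points non-collinear; let r > 0, let α_j ∈ (0, π) be the interior angle at each interior vertex p_j (1 ≤ j ≤ n−2), and set l_j = r/tan(α_j/2) for interior vertices and l₀ = l_{n−1} = 0. Assume ‖p_{j+1} − p_j‖ ≥ l_j + l_{j+1} for all 0 ≤ j ≤ n−2. Then the total smoothed path length, Σ_{j=0}^{n−2} (‖p_{j+1} − p_j‖ − l_j − l_{j+1}) + Σ_{j=1}^{n−2} r·(π − α_j), is at most the polyline length Σ_{j=0}^{n−2} ‖p_{j+1} − p_j‖. (Lemma: the smoothed path Q has total length not longer than the polyline P.) -/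

import Mathlib

/-- the smoothed path Q is not longer than the polyline P: for a polyline
`p 0, …, p (n−1)` (`n ≥ 3`) with consecutive points distinct, consecutive triples
non-collinear, interior angles `α j ∈ (0, π)`, tangent lengths `l j = r / tan (α j / 2)`
(with `l 0 = l (n−1) = 0`) and edges long enough (`‖p (j+1) − p j‖ ≥ l j + l (j+1)`), the
total smoothed length (straight pieces plus arcs `r·(π − α j)`) is at most the polyline
length. -/
theorem smoothed_path_not_longer_than_polyline
    (n : ℕ) (hn : 3 ≤ n)
    (p : ℕ → EuclideanSpace ℝ (Fin 2))
    (hdist : ∀ j, j ≤ n - 2 → p j ≠ p (j + 1))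
    (hncol : ∀ j, 1 ≤ j → j ≤ n - 2 →
      ¬ Collinear ℝ ({p (j - 1), p j, p (j + 1)} : Set (EuclideanSpace ℝ (Fin 2))))
    (r : ℝ) (hr : 0 < r)
    (α : ℕ → ℝ)
    (hα : ∀ j, 1 ≤ j → j ≤ n - 2 → α j = EuclideanGeometry.angle (p (j - 1)) (p j) (p (j + 1)))
    (hα0 : ∀ j, 1 ≤ j → j ≤ n - 2 → α j ∈ Set.Ioo 0 Real.pi)
    (l : ℕ → ℝ)
    (hl : ∀ j, 1 ≤ j → j ≤ n - 2 → l j = r / Real.tan (α j / 2))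
    (hl0 : l 0 = 0) (hln : l (n - 1) = 0)
    (hedge : ∀ j, j ≤ n - 2 → ‖p (j + 1) - p j‖ ≥ l j + l (j + 1)) :
    (∑ j ∈ Finset.range (n - 1), (‖p (j + 1) - p j‖ - l j - l (j + 1))) +
      (∑ j ∈ Finset.Icc 1 (n - 2), r * (Real.pi - α j)) ≤
    ∑ j ∈ Finset.range (n - 1), ‖p (j + 1) - p j‖ := by
  have hm1 : n - 1 = (n - 2) + 1 := by omega
  -- pointwise bound on arcs
  have key : ∑ j ∈ Finset.Icc 1 (n - 2), r * (Real.pi - α j)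
      ≤ ∑ j ∈ Finset.Icc 1 (n - 2), 2 * l j := by
    apply Finset.sum_le_sum
    intro j hj
    rw [Finset.mem_Icc] at hj
    obtain ⟨h1, h2⟩ := hj
    obtain ⟨ha0, hap⟩ := hα0 j h1 h2
    set s : ℝ := Real.pi / 2 - α j / 2 with hs
    have hs0 : 0 < s := by rw [hs]; linarith
    have hs2 : s < Real.pi / 2 := by rw [hs]; linarith
    have htan : Real.tan (α j / 2) = (Real.tan s)⁻¹ := by
      rw [show α j / 2 = Real.pi / 2 - s from by rw [hs]; ring, Real.tan_pi_div_two_sub]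
    have hts : 0 < Real.tan s := Real.tan_pos_of_pos_of_lt_pi_div_two hs0 hs2
    have hst : s < Real.tan s := Real.lt_tan hs0 hs2
    have hlj : l j = r * Real.tan s := by
      rw [hl j h1 h2, htan]
      field_simp
    have hpa : Real.pi - α j = 2 * s := by rw [hs]; ring
    rw [hlj, hpa]
    nlinarith
  -- sum of l's
  have hsum : ∑ j ∈ Finset.range (n - 1), (l j + l (j + 1))
      = ∑ j ∈ Finset.Icc 1 (n - 2), 2 * l j := by
    rw [Finset.sum_add_distrib, hm1, Finset.sum_range_succ', Finset.sum_range_succ,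
      ← Finset.Ico_add_one_right_eq_Icc, Finset.sum_Ico_eq_sum_range]
    simp only [hl0, ← hm1, hln, add_zero]
    rw [show n - 1 - 1 = n - 2 from by omega, ← Finset.sum_add_distrib]
    apply Finset.sum_congr rfl
    intro j _
    rw [add_comm 1 j]
    ring
  have expand : ∑ j ∈ Finset.range (n - 1), (‖p (j + 1) - p j‖ - l j - l (j + 1))
      = ∑ j ∈ Finset.range (n - 1), ‖p (j + 1) - p j‖
        - ∑ j ∈ Finset.range (n - 1), (l j + l (j + 1)) := by
    rw [← Finset.sum_sub_distrib]
    apply Finset.sum_congr rfl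
    intro j _
    ring
  rw [expand, hsum]
  linarith
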